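/- Let 1 → N → G →^ψ G̃ → 1 be a central extension of groups, let n ≥ 3, and let ρ : B_n → G be a homomorphism from the braid group. Then the image of ρ is cyclic if and only if the image of ψ∘ρ is cyclic. -/

import Mathlib

/-- The braid relations on `m` generators. -/
def braidRels (m : ℕ) : Set (FreeGroup (Fin m)) :=
  {r | ∃ i j : Fin m, (i : ℕ) + 2 ≤ (j : ℕ) ∧
      r = FreeGroup.of i * FreeGroup.of j * (FreeGroup.of i)⁻¹ * (FreeGroup.of j)⁻¹} ∪
  {r | ∃ i j : Fin m, (i : ℕ) + 1 = (j : ℕ) ∧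
      r = FreeGroup.of i * FreeGroup.of j * FreeGroup.of i *
        (FreeGroup.of j * FreeGroup.of i * FreeGroup.of j)⁻¹}

/-- The braid group on `n` strands, with `n - 1` standard generators. -/
abbrev BraidGroup (n : ℕ) := PresentedGroup (braidRels (n - 1))

/-- The standard generator `σ_{i+1}` of the braid group (0-indexed: `braidGen i = σ_{i+1}`). -/
def braidGen {n : ℕ} (i : Fin (n - 1)) : BraidGroup n := PresentedGroup.of i

/-- If `a*b*a = b*a*b` and the commutator of `a` and `b` is central, then `a = b`. -/
lemma aux_eq {G : Type*} [Group G] {a b : G}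
    (hc : a * b * a⁻¹ * b⁻¹ ∈ Subgroup.center G) (hb : a * b * a = b * a * b) : a = b := by
  set z := a * b * a⁻¹ * b⁻¹ with hz
  have hcomm : ∀ g : G, g * z = z * g := fun g => (Subgroup.mem_center_iff.mp hc g)
  have h1 : a * b = z * (b * a) := by rw [hz]; group
  have h2 : a * b * a = z * (b * (a * a)) := by rw [h1]; group
  have h3 : b * a * b = z * (b * (b * a)) := by
    calc b * a * b = b * (a * b) := by group
    _ = b * (z * (b * a)) := by rw [h1]
    _ = b * z * (b * a) := by group
    _ = z * b * (b * a) := by rw [hcomm b]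
    _ = z * (b * (b * a)) := by group
  rw [h2, h3] at hb
  have h4 : a * a = b * a := mul_left_cancel (mul_left_cancel hb)
  exact mul_right_cancel h4

/-- The braid relation for adjacent generators. -/
lemma braid_rel {n : ℕ} (i j : Fin (n - 1)) (hij : (i : ℕ) + 1 = (j : ℕ)) :
    braidGen (n := n) i * braidGen j * braidGen i = braidGen j * braidGen i * braidGen j := by
  have hmem : FreeGroup.of i * FreeGroup.of j * FreeGroup.of i *
      (FreeGroup.of j * FreeGroup.of i * FreeGroup.of j)⁻¹ ∈ braidRels (n - 1) :=
    Or.inr ⟨i, j, hij, rfl⟩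
  have h1 : (QuotientGroup.mk (FreeGroup.of i * FreeGroup.of j * FreeGroup.of i *
      (FreeGroup.of j * FreeGroup.of i * FreeGroup.of j)⁻¹) : BraidGroup n) = 1 :=
    (QuotientGroup.eq_one_iff _).mpr (Subgroup.subset_normalClosure hmem)
  have h2 : braidGen (n := n) i * braidGen j * braidGen i *
      (braidGen j * braidGen i * braidGen j)⁻¹ = 1 := h1
  rw [mul_inv_eq_one] at h2
  exact h2

theorem stmt_6 (n : ℕ) (hn : 3 ≤ n) {G G' : Type*} [Group G] [Group G']
    (ψ : G →* G') (hsurj : Function.Surjective ψ) (hcentral : ψ.ker ≤ Subgroup.center G)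
    (ρ : BraidGroup n →* G) :
    IsCyclic ρ.range ↔ IsCyclic (ψ.comp ρ).range := by
  constructor
  · intro h
    rw [MonoidHom.range_comp]
    exact isCyclic_of_surjective _ (ψ.subgroupMap_surjective ρ.range)
  · intro h
    -- all elements of (ψ ∘ ρ).range commute
    obtain ⟨t, ht⟩ := h.exists_generator
    have hcomm : ∀ x y : BraidGroup n, ψ (ρ x) * ψ (ρ y) = ψ (ρ y) * ψ (ρ x) := by
      intro x y
      have hx : ψ (ρ x) ∈ (ψ.comp ρ).range := ⟨x, rfl⟩
      have hy : ψ (ρ y) ∈ (ψ.comp ρ).range := ⟨y, rfl⟩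
      obtain ⟨k, hk⟩ := ht ⟨ψ (ρ x), hx⟩
      obtain ⟨l, hl⟩ := ht ⟨ψ (ρ y), hy⟩
      have hk' : ψ (ρ x) = (t : G') ^ k := by
        have := congrArg Subtype.val hk
        simpa using this.symm
      have hl' : ψ (ρ y) = (t : G') ^ l := by
        have := congrArg Subtype.val hl
        simpa using this.symm
      rw [hk', hl', zpow_mul_comm]
    -- adjacent generators have equal image
    have hadj : ∀ i j : Fin (n - 1), (i : ℕ) + 1 = (j : ℕ) →
        ρ (braidGen i) = ρ (braidGen j) := by
      intro i j hij
      set a := ρ (braidGen i)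
      set b := ρ (braidGen j)
      have hker : a * b * a⁻¹ * b⁻¹ ∈ ψ.ker := by
        rw [MonoidHom.mem_ker]
        simp only [map_mul, map_inv]
        rw [hcomm (braidGen i) (braidGen j)]
        simp only [a, b]
        group
      have hrel : a * b * a = b * a * b := by
        have := braid_rel (n := n) i j hij
        have := congrArg ρ this
        simpa [a, b, map_mul] using this
      exact aux_eq (hcentral hker) hrel
    -- all generators have equal image
    have hm : 2 ≤ n - 1 := by omega
    have hall : ∀ i : Fin (n - 1), ρ (braidGen i) = ρ (braidGen (⟨0, by omega⟩ : Fin (n - 1))) := by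
      intro i
      obtain ⟨k, hk⟩ := i
      induction k with
      | zero => rfl
      | succ m ih =>
        have hm' : m < n - 1 := by omega
        rw [← hadj ⟨m, hm'⟩ ⟨m + 1, hk⟩ rfl]
        exact ih hm'
    -- the range is generated by a single element
    set g := ρ (braidGen (⟨0, by omega⟩ : Fin (n - 1))) with hg
    have hrange : ρ.range = Subgroup.zpowers g := by
      apply le_antisymm
      · rintro _ ⟨x, rfl⟩
        exact PresentedGroup.generated_by _ (Subgroup.comap ρ (Subgroup.zpowers g))
          (fun j => Subgroup.mem_comap.mpr (hall j ▸ Subgroup.mem_zpowers g)) x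
      · intro x hx
        obtain ⟨k, rfl⟩ := Subgroup.mem_zpowers_iff.mp hx
        exact Subgroup.zpow_mem _ (MonoidHom.mem_range.mpr ⟨_, rfl⟩) k
    rw [hrange]
    refine ⟨⟨⟨g, Subgroup.mem_zpowers g⟩, ?_⟩⟩
    rintro ⟨x, hx⟩
    obtain ⟨k, rfl⟩ := Subgroup.mem_zpowers_iff.mp hx
    exact Subgroup.mem_zpowers_iff.mpr ⟨k, by ext; simp⟩
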